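/- With f(x,t) = ½(x + (2i−6v)t − ½)(x − (6v+2i)t − ½) + 1/8 and g(x,t) = ½(x + (2i−6v)t + ½)(x − (6v+2i)t − 3/2) + 1/8, the function f is real-valued for real x, t, and the pair (f, g) satisfies the first bilinear equation (D_x² + 2) f·f = 2 g·ḡ. -/

import Mathlib

open Complex

noncomputable def dx (φ : ℝ → ℝ → ℂ) : ℝ → ℝ → ℂ := fun x t => deriv (fun y => φ y t) x

noncomputable def fτ (v : ℝ) : ℝ → ℝ → ℂ := fun x t =>
  (1/2) * ((x : ℂ) + (2*I - 6*v)*t - 1/2) * ((x : ℂ) - (6*v + 2*I)*t - 1/2) + 1/8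

noncomputable def gτ (v : ℝ) : ℝ → ℝ → ℂ := fun x t =>
  (1/2) * ((x : ℂ) + (2*I - 6*v)*t + 1/2) * ((x : ℂ) - (6*v + 2*I)*t - 3/2) + 1/8

lemma ofReal_hasDerivAt (x : ℝ) : HasDerivAt (fun y : ℝ => (y : ℂ)) 1 x := by
  simpa using (hasDerivAt_id x).ofReal_comp

lemma fτ_hasDerivAt (v : ℝ) (x t : ℝ) :
    HasDerivAt (fun y : ℝ => fτ v y t)
      ((1/2) * (((x : ℂ) + (2*I - 6*v)*t - 1/2) + ((x : ℂ) - (6*v + 2*I)*t - 1/2))) x := by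
  have h := ofReal_hasDerivAt x
  have h1 : HasDerivAt (fun y : ℝ => (y : ℂ) + (2*I - 6*(v:ℂ))*t - 1/2) 1 x :=
    (h.add_const _).sub_const _
  have h2 : HasDerivAt (fun y : ℝ => (y : ℂ) - (6*(v:ℂ) + 2*I)*t - 1/2) 1 x :=
    (h.sub_const _).sub_const _
  have := (((h1.mul h2).const_mul ((1:ℂ)/2)).add_const (1/8))
  convert this using 1
  · rfl
  · ext y; simp [fτ]; ring
  · ring

lemma dx_fτ (v : ℝ) (x t : ℝ) :
    dx (fτ v) x t = (1/2) * (((x : ℂ) + (2*I - 6*v)*t - 1/2) + ((x : ℂ) - (6*v + 2*I)*t - 1/2)) := by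
  simp [dx, (fτ_hasDerivAt v x t).deriv]

lemma dx_dx_fτ (v : ℝ) (x t : ℝ) : dx (dx (fτ v)) x t = 1 := by
  have h : (fun y : ℝ => dx (fτ v) y t)
      = fun y : ℝ => (y : ℂ) + ((1/2) * ((2*I - 6*(v:ℂ))*t - (6*(v:ℂ) + 2*I)*t - 1)) := by
    ext y; rw [dx_fτ]; ring
  have hd : HasDerivAt (fun y : ℝ => (y : ℂ) + ((1/2) * ((2*I - 6*(v:ℂ))*t - (6*(v:ℂ) + 2*I)*t - 1))) 1 x :=
    (ofReal_hasDerivAt x).add_const _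
  show deriv (fun y => dx (fτ v) y t) x = 1
  rw [h]
  exact hd.deriv

/-- `f` is real-valued and `(f, g)` satisfies the first bilinear equation
`(D_x² + 2) f·f = 2 g ḡ`, i.e. `2 f f_{xx} − 2 f_x² + 2 f² = 2 g ḡ`. -/
theorem first_bilinear_equation (v : ℝ) :
    (∀ x t : ℝ, (fτ v x t).im = 0) ∧
    (∀ x t : ℝ,
      2 * fτ v x t * dx (dx (fτ v)) x t - 2 * (dx (fτ v) x t)^2 + 2 * (fτ v x t)^2
        = 2 * gτ v x t * (starRingEnd ℂ) (gτ v x t)) := by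
  constructor
  · intro x t
    simp only [fτ, Complex.add_im, Complex.mul_im, Complex.sub_im, Complex.sub_re,
      Complex.add_re, Complex.mul_re, Complex.ofReal_re, Complex.ofReal_im,
      Complex.I_re, Complex.I_im, Complex.div_ofNat_im, Complex.div_ofNat_re,
      Complex.one_re, Complex.one_im, Complex.re_ofNat, Complex.im_ofNat]
    ring
  · intro x t
    rw [dx_fτ, dx_dx_fτ]
    have hconj : (starRingEnd ℂ) (gτ v x t)
        = (1/2) * ((x : ℂ) + (-2*I - 6*v)*t + 1/2) * ((x : ℂ) - (6*v - 2*I)*t - 3/2) + 1/8 := by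
      simp only [gτ, map_add, map_mul, map_sub, map_div₀, map_one, map_ofNat,
        Complex.conj_ofReal, Complex.conj_I]
      ring
    rw [hconj]
    simp only [fτ, gτ]
    ring
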